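/- Let $A$ be unitary and $P, N$ elements of a unital C*-algebra with $0 \le P, N \le 1$ and $PN = 0$. Then $(PAP + N^2)(PAP + N^2)^* = (PAP)(PAP)^* + N^4$ and $\|2(PAP+N^2)(PAP+N^2)^* - 1 - (2P^4 + 2N^4 - 1)\| \le 2\|[P^2, A]\|$. -/
import Mathlib


/-- Let `A` be unitary and `P, N` elements of a unital C*-algebra with `0 ≤ P, N ≤ 1`
and `PN = 0`.  Then `(PAP + N²)(PAP + N²)^* = (PAP)(PAP)^* + N⁴` and
`‖2(PAP + N²)(PAP + N²)^* - 1 - (2P⁴ + 2N⁴ - 1)‖ ≤ 2‖[P², A]‖`. -/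
theorem lifted_index_estimate
    {𝒜 : Type*} [CStarAlgebra 𝒜] [PartialOrder 𝒜] [StarOrderedRing 𝒜]
    (A P N : 𝒜) (hA : A ∈ unitary 𝒜)
    (hP0 : 0 ≤ P) (hP1 : P ≤ 1) (hN0 : 0 ≤ N) (hN1 : N ≤ 1) (hPN : P * N = 0) :
    (P * A * P + N ^ 2) * star (P * A * P + N ^ 2) =
        (P * A * P) * star (P * A * P) + N ^ 4 ∧
      ‖2 * ((P * A * P + N ^ 2) * star (P * A * P + N ^ 2)) - 1 -
          (2 * P ^ 4 + 2 * N ^ 4 - 1)‖ ≤ 2 * ‖P ^ 2 * A - A * P ^ 2‖ := by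
  have hsP : star P = P := (IsSelfAdjoint.of_nonneg hP0).star_eq
  have hsN : star N = N := (IsSelfAdjoint.of_nonneg hN0).star_eq
  have hNP : N * P = 0 := by
    have := congrArg star hPN
    simpa [star_mul, hsP, hsN] using this
  have hstar : star (P * A * P) = P * star A * P := by
    simp [star_mul, hsP, mul_assoc]
  have hsN2 : star (N ^ 2) = N ^ 2 := by
    simp [pow_two, star_mul, hsN]
  have c1 : (P * A * P) * N ^ 2 = 0 := by
    have h : P * A * P * N = 0 := by rw [mul_assoc, hPN, mul_zero]
    rw [sq, ← mul_assoc, h, zero_mul]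
  have c2 : N ^ 2 * (P * star A * P) = 0 := by
    have h : N ^ 2 * P = 0 := by rw [sq, mul_assoc, hNP, mul_zero]
    rw [← mul_assoc, ← mul_assoc, h, zero_mul, zero_mul]
  have heq : (P * A * P + N ^ 2) * star (P * A * P + N ^ 2) =
      (P * A * P) * star (P * A * P) + N ^ 4 := by
    rw [star_add, hsN2, hstar, mul_add, add_mul, add_mul, c1, c2, add_zero, zero_add,
      ← hstar, ← pow_add]
  refine ⟨heq, ?_⟩
  have hPnorm : ‖P‖ ≤ 1 := (CStarAlgebra.norm_le_one_iff_of_nonneg P hP0).mpr hP1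
  have hD : (P * A * P) * star (P * A * P) - P ^ 4 =
      P * ((A * P ^ 2 - P ^ 2 * A) * star A) * P := by
    rw [hstar]
    have h1 : A * star A = 1 := (Unitary.mem_iff.mp hA).2
    have e : P ^ 4 = P * (P ^ 2 * (A * star A)) * P := by rw [h1]; noncomm_ring
    rw [e]; noncomm_ring
  have hDnorm : ‖(P * A * P) * star (P * A * P) - P ^ 4‖ ≤ ‖P ^ 2 * A - A * P ^ 2‖ := by
    rw [hD]
    have hu : ‖(A * P ^ 2 - P ^ 2 * A) * star A‖ = ‖A * P ^ 2 - P ^ 2 * A‖ :=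
      CStarRing.norm_mul_mem_unitary _ (Unitary.star_mem hA)
    calc ‖P * ((A * P ^ 2 - P ^ 2 * A) * star A) * P‖
        ≤ ‖P * ((A * P ^ 2 - P ^ 2 * A) * star A)‖ * ‖P‖ := norm_mul_le _ _
      _ ≤ ‖P‖ * ‖(A * P ^ 2 - P ^ 2 * A) * star A‖ * ‖P‖ := by
          gcongr; exact norm_mul_le _ _
      _ ≤ 1 * ‖(A * P ^ 2 - P ^ 2 * A) * star A‖ * 1 := by gcongr
      _ = ‖A * P ^ 2 - P ^ 2 * A‖ := by rw [hu]; ring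
      _ = ‖P ^ 2 * A - A * P ^ 2‖ := norm_sub_rev _ _
  have hrw : 2 * ((P * A * P + N ^ 2) * star (P * A * P + N ^ 2)) - 1 -
      (2 * P ^ 4 + 2 * N ^ 4 - 1) =
      2 * ((P * A * P) * star (P * A * P) - P ^ 4) := by
    rw [heq]; noncomm_ring
  rw [hrw]
  calc ‖(2 : 𝒜) * ((P * A * P) * star (P * A * P) - P ^ 4)‖
      ≤ ‖(2 : 𝒜)‖ * ‖(P * A * P) * star (P * A * P) - P ^ 4‖ := norm_mul_le _ _
    _ ≤ 2 * ‖P ^ 2 * A - A * P ^ 2‖ := by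
        have h2 : ‖(2 : 𝒜)‖ ≤ 2 := by
          rcases subsingleton_or_nontrivial 𝒜 with h | h
          · simp [Subsingleton.elim (2 : 𝒜) 0]
          · calc ‖(2 : 𝒜)‖ = ‖(1 : 𝒜) + 1‖ := by norm_num
              _ ≤ ‖(1 : 𝒜)‖ + ‖(1 : 𝒜)‖ := norm_add_le _ _
              _ = 2 := by rw [norm_one]; norm_num
        gcongr
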